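/- Let ρ be a density matrix and M an operator with 0 ≤ M ≤ I such that tr(Mρ) ≥ 1 - ε. Then the post-measurement state ρ' = √M ρ √M / tr(Mρ) satisfies d_tr(ρ, ρ') ≤ 2√ε. -/

import Mathlib

open Matrix ComplexOrder

/-- The square root `Matrix.PosSemidef.sqrt` of a positive semidefinite matrix, as Mathlib
(December 2024) defined it; that definition has since been removed from Mathlib. -/
noncomputable def Matrix.PosSemidef.sqrt {n : Type*} [Fintype n] [DecidableEq n]
    {A : Matrix n n ℂ} (hA : A.PosSemidef) : Matrix n n ℂ :=
  hA.1.eigenvectorUnitary.1 * diagonal ((↑) ∘ (√·) ∘ hA.1.eigenvalues) *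
    (star hA.1.eigenvectorUnitary : Matrix n n ℂ)

lemma Matrix.PosSemidef.sqrt_mul_self {n : Type*} [Fintype n] [DecidableEq n]
    {A : Matrix n n ℂ} (hA : A.PosSemidef) : hA.sqrt * hA.sqrt = A := by
  unfold Matrix.PosSemidef.sqrt
  have hU : (star hA.1.eigenvectorUnitary : Matrix n n ℂ) * hA.1.eigenvectorUnitary.1 = 1 :=
    Matrix.UnitaryGroup.star_mul_self _
  conv_rhs => rw [show A = hA.1.eigenvectorUnitary.1 * diagonal (((↑) : ℝ → ℂ) ∘ hA.1.eigenvalues) *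
    (star hA.1.eigenvectorUnitary : Matrix n n ℂ) from hA.1.spectral_theorem]
  simp only [Matrix.mul_assoc]
  rw [← Matrix.mul_assoc (star hA.1.eigenvectorUnitary : Matrix n n ℂ), hU, Matrix.one_mul,
    ← Matrix.mul_assoc (diagonal _) (diagonal _), diagonal_mul_diagonal]
  congr 3
  funext i
  simp [← Complex.ofReal_mul, Real.mul_self_sqrt (hA.eigenvalues_nonneg i)]

lemma Matrix.PosSemidef.posSemidef_sqrt {n : Type*} [Fintype n] [DecidableEq n]
    {A : Matrix n n ℂ} (hA : A.PosSemidef) : hA.sqrt.PosSemidef := by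
  unfold Matrix.PosSemidef.sqrt
  have hD : (diagonal (((↑) : ℝ → ℂ) ∘ (√·) ∘ hA.1.eigenvalues)).PosSemidef :=
    posSemidef_diagonal_iff.mpr fun i => Complex.zero_le_real.mpr (Real.sqrt_nonneg _)
  simpa [Matrix.star_eq_conjTranspose] using
    hD.mul_mul_conjTranspose_same hA.1.eigenvectorUnitary.1

private lemma trace_cs {d : ℕ} (A B : Matrix (Fin d) (Fin d) ℂ) :
    ‖(Aᴴ * B).trace‖ ≤
      Real.sqrt ((Aᴴ * A).trace.re) * Real.sqrt ((Bᴴ * B).trace.re) := by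
  classical
  set f : EuclideanSpace ℂ (Fin d × Fin d) := WithLp.toLp 2 (fun x => A x.1 x.2) with hf
  set g : EuclideanSpace ℂ (Fin d × Fin d) := WithLp.toLp 2 (fun x => B x.1 x.2) with hg
  have htr : (Aᴴ * B).trace = inner ℂ f g := by
    simp only [PiLp.inner_apply, RCLike.inner_apply, hf, hg, Matrix.trace, Matrix.diag,
      Matrix.mul_apply, conjTranspose_apply, Fintype.sum_prod_type, starRingEnd_apply,
      PiLp.toLp_apply]
    rw [Finset.sum_comm]
    exact Finset.sum_congr rfl fun _ _ => Finset.sum_congr rfl fun _ _ => mul_comm _ _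
  have hA2 : (Aᴴ * A).trace.re = ‖f‖ ^ 2 := by
    rw [EuclideanSpace.norm_eq, Real.sq_sqrt (by positivity)]
    simp only [Matrix.trace, Matrix.diag, Matrix.mul_apply, conjTranspose_apply,
      Complex.re_sum, Fintype.sum_prod_type, hf, PiLp.toLp_apply]
    rw [Finset.sum_comm]
    congr 1; ext i; congr 1; ext j
    rw [RCLike.star_def, mul_comm, Complex.mul_conj]
    simp [Complex.normSq_eq_norm_sq, ← Complex.ofReal_pow]
  have hB2 : (Bᴴ * B).trace.re = ‖g‖ ^ 2 := by
    rw [EuclideanSpace.norm_eq, Real.sq_sqrt (by positivity)]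
    simp only [Matrix.trace, Matrix.diag, Matrix.mul_apply, conjTranspose_apply,
      Complex.re_sum, Fintype.sum_prod_type, hg, PiLp.toLp_apply]
    rw [Finset.sum_comm]
    congr 1; ext i; congr 1; ext j
    rw [RCLike.star_def, mul_comm, Complex.mul_conj]
    simp [Complex.normSq_eq_norm_sq, ← Complex.ofReal_pow]
  rw [htr, hA2, hB2, Real.sqrt_sq (norm_nonneg _), Real.sqrt_sq (norm_nonneg _)]
  exact norm_inner_le_norm f g

private lemma psd_trace_nonneg {d : ℕ} {A : Matrix (Fin d) (Fin d) ℂ} (hA : A.PosSemidef) :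
    0 ≤ A.trace := by
  unfold Matrix.trace
  apply Finset.sum_nonneg
  intro i _
  have := hA.diag_nonneg (i := i)
  simpa [dotProduct, mulVec, Pi.single_apply, Finset.sum_ite_eq, Matrix.diag] using this

private lemma psd_trace_re {d : ℕ} {A : Matrix (Fin d) (Fin d) ℂ} (hA : A.PosSemidef) :
    A.trace = (A.trace.re : ℂ) ∧ 0 ≤ A.trace.re := by
  have h := psd_trace_nonneg hA
  rw [Complex.le_def] at h
  simp only [Complex.zero_re, Complex.zero_im] at h
  exact ⟨by rw [Complex.ext_iff]; simp [← h.2], h.1⟩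

private lemma psd_mul_trace_nonneg {d : ℕ} {A B : Matrix (Fin d) (Fin d) ℂ}
    (hA : A.PosSemidef) (hB : B.PosSemidef) : 0 ≤ (A * B).trace := by
  classical
  have h1 : A * B = hA.sqrt * (hA.sqrt * B) := by
    rw [← Matrix.mul_assoc, hA.sqrt_mul_self]
  rw [h1, Matrix.trace_mul_comm]
  have h3 : (hA.sqrtᴴ * B * hA.sqrt).PosSemidef := hB.conjTranspose_mul_mul_same hA.sqrt
  rw [hA.posSemidef_sqrt.1.eq] at h3
  exact psd_trace_nonneg h3

private lemma eig_le_one {d : ℕ} {M : Matrix (Fin d) (Fin d) ℂ} (hM : M.PosSemidef)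
    (hMI : ((1 : Matrix (Fin d) (Fin d) ℂ) - M).PosSemidef) (i : Fin d) :
    hM.1.eigenvalues i ≤ 1 := by
  have h := hMI.re_dotProduct_nonneg ⇑(hM.1.eigenvectorBasis i)
  have h1 : ((1 : Matrix (Fin d) (Fin d) ℂ) - M) *ᵥ ⇑(hM.1.eigenvectorBasis i)
      = ⇑(hM.1.eigenvectorBasis i) - M *ᵥ ⇑(hM.1.eigenvectorBasis i) := by
    rw [Matrix.sub_mulVec, Matrix.one_mulVec]
  rw [h1, dotProduct_sub, map_sub] at h
  have h2 : RCLike.re (dotProduct (star ⇑(hM.1.eigenvectorBasis i))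
      ⇑(hM.1.eigenvectorBasis i)) = 1 := by
    rw [dotProduct_comm, ← EuclideanSpace.inner_eq_star_dotProduct]
    simp [inner_self_eq_norm_sq_to_K, hM.1.eigenvectorBasis.orthonormal.1 i]
  rw [h2, ← hM.1.eigenvalues_eq i] at h
  linarith

private lemma sqrt_spectral {d : ℕ} {M : Matrix (Fin d) (Fin d) ℂ} (hM : M.PosSemidef) :
    ∃ (V : Matrix (Fin d) (Fin d) ℂ) (μ : Fin d → ℝ),
      star V * V = 1 ∧
      hM.sqrt = V * diagonal (fun i => (Real.sqrt (μ i) : ℂ)) * star V ∧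
      M = V * diagonal (fun i => (μ i : ℂ)) * star V ∧
      (∀ i, 0 ≤ μ i) ∧
      (∀ i, ((1 : Matrix (Fin d) (Fin d) ℂ) - M).PosSemidef → μ i ≤ 1) := by
  refine ⟨(hM.1.eigenvectorUnitary : Matrix (Fin d) (Fin d) ℂ), hM.1.eigenvalues,
    ?_, rfl, hM.1.spectral_theorem, hM.eigenvalues_nonneg, fun i hMI => eig_le_one hM hMI i⟩
  exact Matrix.UnitaryGroup.star_mul_self _

private lemma sqrt_sub_psd {d : ℕ} {M : Matrix (Fin d) (Fin d) ℂ} (hM : M.PosSemidef)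
    (hMI : ((1 : Matrix (Fin d) (Fin d) ℂ) - M).PosSemidef) :
    (hM.sqrt - M).PosSemidef := by
  obtain ⟨V, μ, hV, hsq, hspec, hμ0, hμ1⟩ := sqrt_spectral hM
  have hdiff : hM.sqrt - M = V *
      diagonal (fun i => ((Real.sqrt (μ i) - μ i : ℝ) : ℂ)) * star V := by
    rw [hsq]; rw [hspec]
    rw [← Matrix.sub_mul, ← Matrix.mul_sub,
      show ((diagonal fun i => (Real.sqrt (μ i) : ℂ)) - diagonal fun i => ((μ i : ℝ) : ℂ))
          = diagonal (fun i => ((Real.sqrt (μ i) - μ i : ℝ) : ℂ)) by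
        rw [Matrix.diagonal_sub]; congr with i; push_cast; ring]
  rw [hdiff]
  apply PosSemidef.mul_mul_conjTranspose_same
  refine posSemidef_diagonal_iff.mpr fun i => ?_
  have h1 := hμ0 i
  have h2 := hμ1 i hMI
  have h3 : 0 ≤ Real.sqrt (μ i) - μ i := by
    nlinarith [Real.sq_sqrt h1, Real.sqrt_nonneg (μ i)]
  exact Complex.zero_le_real.mpr h3

private lemma conj_conj_mul {d : ℕ} {V : Matrix (Fin d) (Fin d) ℂ} (hV : star V * V = 1)
    (a b : Fin d → ℂ) :
    (V * diagonal a * star V) * (V * diagonal b * star V)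
      = V * diagonal (fun i => a i * b i) * star V := by
  have h : ∀ C : Matrix (Fin d) (Fin d) ℂ, star V * (V * C) = C := fun C => by
    rw [← Matrix.mul_assoc, hV, Matrix.one_mul]
  calc (V * diagonal a * star V) * (V * diagonal b * star V)
      = (V * diagonal a) * (star V * (V * (diagonal b * star V))) := by
        simp only [Matrix.mul_assoc]
    _ = (V * diagonal a) * (diagonal b * star V) := by rw [h]
    _ = V * (diagonal a * diagonal b) * star V := by simp only [Matrix.mul_assoc]
    _ = V * diagonal (fun i => a i * b i) * star V := by rw [Matrix.diagonal_mul_diagonal]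

private lemma conj_trace {d : ℕ} {V : Matrix (Fin d) (Fin d) ℂ} (hV : star V * V = 1)
    (a : Fin d → ℂ) : ((V * diagonal a * star V)).trace = ∑ i, a i := by
  rw [Matrix.trace_mul_cycle, hV, Matrix.one_mul, Matrix.trace_diagonal]

private lemma smul_psd_real {d : ℕ} {A : Matrix (Fin d) (Fin d) ℂ} (hA : A.PosSemidef)
    (c : ℝ) (hc : 0 ≤ c) : ((c : ℂ) • A).PosSemidef := by
  constructor
  · unfold Matrix.IsHermitian
    rw [conjTranspose_smul, hA.1.eq]
    congr 1
    simp [RCLike.star_def, Complex.conj_ofReal]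
  · exact (hA.smul (Complex.zero_le_real.mpr hc)).2

set_option maxHeartbeats 1000000 in
/-- Gentle Measurement Lemma: if `ρ` is a density matrix, `0 ≤ M ≤ I`, and
`tr(Mρ) ≥ 1 - ε`, then the post-measurement state `ρ' = √M ρ √M / tr(Mρ)` satisfies
`d_tr(ρ, ρ') ≤ 2√ε` (trace distance computed as half the sum of the absolute values of
the eigenvalues of `ρ - ρ'`). -/
theorem gentle_measurement (d : ℕ) (ρ M : Matrix (Fin d) (Fin d) ℂ)
    (hρ : ρ.PosSemidef) (hρ1 : ρ.trace = 1)
    (hM : M.PosSemidef) (hMI : ((1 : Matrix (Fin d) (Fin d) ℂ) - M).PosSemidef)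
    (ε : ℝ) (hε : 0 ≤ ε)
    (h : 1 - ε ≤ (M * ρ).trace.re)
    (ρ' : Matrix (Fin d) (Fin d) ℂ)
    (hρ' : ρ' = ((M * ρ).trace)⁻¹ • (hM.sqrt * ρ * hM.sqrt)) :
    ∀ hdiff : (ρ - ρ').IsHermitian,
      (1 / 2) * ∑ i, |hdiff.eigenvalues i| ≤ 2 * Real.sqrt ε := by
  intro hdiff
  classical
  set X := hM.sqrt with hX
  set R := hρ.sqrt with hR
  set p : ℂ := (M * ρ).trace with hp
  -- basic hermitian facts
  have hXH : Xᴴ = X := hM.posSemidef_sqrt.1.eq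
  have hRH : Rᴴ = R := hρ.posSemidef_sqrt.1.eq
  have hRR : R * R = ρ := hρ.sqrt_mul_self
  have hXX : X * X = M := hM.sqrt_mul_self
  have h1XH : ((1 : Matrix (Fin d) (Fin d) ℂ) - X)ᴴ = 1 - X := by
    rw [conjTranspose_sub, conjTranspose_one, hXH]
  -- XρX is PSD and its trace is p
  have hCpsd : (X * ρ * X).PosSemidef := by
    have := hρ.mul_mul_conjTranspose_same X
    rwa [hXH] at this
  have hCtr : (X * ρ * X).trace = p := by
    rw [Matrix.trace_mul_cycle, hXX]
  -- p is a nonnegative real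
  have hpre : p = (p.re : ℂ) ∧ 0 ≤ p.re := by
    have := psd_trace_re hCpsd
    rwa [hCtr] at this
  -- p.re ≤ 1
  have hple : p.re ≤ 1 := by
    have h0 := psd_mul_trace_nonneg hMI hρ
    rw [Matrix.sub_mul, Matrix.one_mul] at h0
    rw [Complex.le_def] at h0
    have := h0.1
    rw [Matrix.trace_sub, Complex.sub_re, hρ1] at this
    simpa using this
  -- trace of ρ'
  have hρ'tr : ρ'.trace = p⁻¹ * p := by
    rw [hρ', Matrix.trace_smul, hCtr, smul_eq_mul]
  have hρ'psd : ρ'.PosSemidef := by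
    rw [hρ', hpre.1, ← Complex.ofReal_inv]
    exact smul_psd_real hCpsd _ (inv_nonneg.mpr hpre.2)
  -- spectral data for the difference
  set lam := hdiff.eigenvalues with hlam
  set W : Matrix (Fin d) (Fin d) ℂ := (hdiff.eigenvectorUnitary : Matrix (Fin d) (Fin d) ℂ)
    with hW
  have hWu : star W * W = 1 := Matrix.UnitaryGroup.star_mul_self _
  have hWu' : W * star W = 1 := hdiff.eigenvectorUnitary.2.2
  have hDspec : ρ - ρ' = W * diagonal (fun i => ((lam i : ℝ) : ℂ)) * star W :=
    hdiff.spectral_theorem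
  set s : Fin d → ℝ := fun i => if 0 ≤ lam i then 1 else -1 with hs
  set U : Matrix (Fin d) (Fin d) ℂ := W * diagonal (fun i => ((s i : ℝ) : ℂ)) * star W with hU
  have hUH : Uᴴ = U := by
    have hd : ((diagonal (fun i => ((s i : ℝ) : ℂ))) : Matrix (Fin d) (Fin d) ℂ).IsHermitian :=
      isHermitian_diagonal_of_self_adjoint _ (funext fun i => Complex.conj_ofReal (s i))
    have : (W * diagonal (fun i => ((s i : ℝ) : ℂ)) * Wᴴ).IsHermitian :=
      isHermitian_mul_mul_conjTranspose _ hd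
    rw [Matrix.star_eq_conjTranspose] at hU
    rw [hU]
    exact this.eq
  have hUU : U * U = 1 := by
    rw [hU, conj_conj_mul hWu]
    have : (fun i => ((s i : ℝ) : ℂ) * ((s i : ℝ) : ℂ)) = fun _ => (1 : ℂ) := by
      ext i
      rw [hs]
      by_cases hi : 0 ≤ lam i <;> simp [hi]
    rw [this, Matrix.diagonal_one, Matrix.mul_one, hWu']
  -- the sum of |eigenvalues| is the trace against U
  have htrU : ((ρ - ρ') * U).trace = ((∑ i, |lam i| : ℝ) : ℂ) := by
    rw [hDspec, hU, conj_conj_mul hWu, conj_trace hWu]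
    push_cast
    congr 1
    ext i
    rw [hs]
    by_cases hi : 0 ≤ lam i
    · simp [hi, abs_of_nonneg hi]
    · push_neg at hi
      simp [hi.not_ge, abs_of_neg hi]
  have hsum : ∑ i, |lam i| = ((ρ - ρ') * U).trace.re := by rw [htrU]; simp
  -- 1 ± U are PSD
  have hUpm : ∀ c : ℝ, (∀ i, 0 ≤ c + s i) →
      ((c : ℂ) • (1 : Matrix (Fin d) (Fin d) ℂ) + U).PosSemidef := by
    intro c hc
    have h1 : (c : ℂ) • (1 : Matrix (Fin d) (Fin d) ℂ) + U
        = W * diagonal (fun i => ((c + s i : ℝ) : ℂ)) * star W := by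
      rw [hU]
      have h2 : (c : ℂ) • (1 : Matrix (Fin d) (Fin d) ℂ)
          = W * diagonal (fun _ => (c : ℂ)) * star W := by
        rw [← Matrix.smul_one_eq_diagonal]
        rw [Matrix.mul_smul, Matrix.smul_mul, Matrix.mul_one, hWu']
      rw [h2, ← Matrix.add_mul, ← Matrix.mul_add, Matrix.diagonal_add]
      congr 2
      ext i
      push_cast
      ring
    rw [h1]
    apply PosSemidef.mul_mul_conjTranspose_same
    exact posSemidef_diagonal_iff.mpr fun i => Complex.zero_le_real.mpr (hc i)
  have hUpm' : ∀ c : ℝ, (∀ i, 0 ≤ c - s i) →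
      ((c : ℂ) • (1 : Matrix (Fin d) (Fin d) ℂ) - U).PosSemidef := by
    intro c hc
    have h1 : (c : ℂ) • (1 : Matrix (Fin d) (Fin d) ℂ) - U
        = W * diagonal (fun i => ((c - s i : ℝ) : ℂ)) * star W := by
      rw [hU]
      have h2 : (c : ℂ) • (1 : Matrix (Fin d) (Fin d) ℂ)
          = W * diagonal (fun _ => (c : ℂ)) * star W := by
        rw [← Matrix.smul_one_eq_diagonal]
        rw [Matrix.mul_smul, Matrix.smul_mul, Matrix.mul_one, hWu']
      rw [h2, ← Matrix.sub_mul, ← Matrix.mul_sub, Matrix.diagonal_sub]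
      congr 2
      ext i
      push_cast
      ring
    rw [h1]
    apply PosSemidef.mul_mul_conjTranspose_same
    exact posSemidef_diagonal_iff.mpr fun i => Complex.zero_le_real.mpr (hc i)
  have hsabs : ∀ i, |s i| ≤ 1 := by
    intro i
    rw [hs]
    by_cases hi : 0 ≤ lam i <;> simp [hi]
  by_cases hpbig : 1 / 2 < p.re
  case neg =>
    -- trivial bound: trace distance is at most 1, and ε ≥ 1/2
    push_neg at hpbig
    have hε2 : 1 / 2 ≤ ε := by linarith
    have hb1 : (ρ * U).trace.re ≤ 1 := by
      have e1 := psd_mul_trace_nonneg hρ (hUpm' 1 (fun i => by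
        have := hsabs i; rw [abs_le] at this; linarith))
      have e2 : ρ * (((1 : ℝ) : ℂ) • (1 : Matrix (Fin d) (Fin d) ℂ) - U) = ρ - ρ * U := by
        rw [Complex.ofReal_one, one_smul, Matrix.mul_sub, Matrix.mul_one]
      rw [e2, Complex.le_def] at e1
      have := e1.1
      rw [Matrix.trace_sub, Complex.sub_re, hρ1] at this
      simpa using this
    have hρ'tr1 : ρ'.trace.re ≤ 1 := by
      rw [hρ'tr]
      by_cases hp0 : p = 0
      · simp [hp0]
      · rw [inv_mul_cancel₀ hp0]; simp
    have hb2 : -1 ≤ (ρ' * U).trace.re := by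
      have e1 := psd_mul_trace_nonneg hρ'psd (hUpm 1 (fun i => by
        have := hsabs i; rw [abs_le] at this; linarith))
      have e2 : ρ' * (((1 : ℝ) : ℂ) • (1 : Matrix (Fin d) (Fin d) ℂ) + U) = ρ' + ρ' * U := by
        rw [Complex.ofReal_one, one_smul, Matrix.mul_add, Matrix.mul_one]
      rw [e2, Complex.le_def] at e1
      have := e1.1
      rw [Matrix.trace_add, Complex.add_re] at this
      simp only [Complex.zero_re] at this
      linarith
    have hble : ∑ i, |lam i| ≤ 2 := by
      rw [hsum, Matrix.sub_mul, Matrix.trace_sub, Complex.sub_re]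
      linarith
    have hsq : 1 ≤ 2 * Real.sqrt ε := by
      nlinarith [Real.mul_self_sqrt hε, Real.sqrt_nonneg ε]
    linarith
  case pos =>
    have hppos : 0 < p.re := by linarith
    have hpne : p ≠ 0 := by
      rw [hpre.1]
      exact_mod_cast Complex.ofReal_ne_zero.mpr (ne_of_gt hppos)
    set εp : ℝ := 1 - p.re with hεp
    have hεp0 : 0 ≤ εp := by simp only [hεp]; linarith
    have hεpε : εp ≤ ε := by simp only [hεp]; linarith
    have hεp1 : εp ≤ 1 := by simp only [hεp]; linarith
    -- re of trace of X * ρ is at least p.re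
    have hXρ : p.re ≤ (X * ρ).trace.re := by
      have e1 := psd_mul_trace_nonneg (sqrt_sub_psd hM hMI) hρ
      rw [Matrix.sub_mul, Matrix.trace_sub, Complex.le_def] at e1
      have := e1.1
      rw [Complex.sub_re] at this
      simp only [Complex.zero_re] at this
      linarith
    -- the Gram-type matrix G and its trace bound
    set G : Matrix (Fin d) (Fin d) ℂ := (1 - X) * (ρ * (1 - X)) with hG
    have hGexp : G = ρ - ρ * X - X * ρ + X * (ρ * X) := by
      rw [hG]; noncomm_ring
    have hGtr : G.trace.re ≤ εp := by
      rw [hGexp, Matrix.trace_add, Matrix.trace_sub, Matrix.trace_sub]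
      have e1 : (X * (ρ * X)).trace = p := by rw [← Matrix.mul_assoc]; exact hCtr
      have e2 : (ρ * X).trace = (X * ρ).trace := Matrix.trace_mul_comm ρ X
      rw [e1, e2, hρ1]
      simp only [Complex.add_re, Complex.sub_re, Complex.one_re]
      linarith
    -- helper for reassociated products with R * R = ρ
    have hRRC : ∀ C : Matrix (Fin d) (Fin d) ℂ, R * (R * C) = ρ * C := fun C => by
      rw [← Matrix.mul_assoc, hRR]
    -- Cauchy-Schwarz bound 1
    have cs1 := trace_cs (R * (1 - X)) (R * U)
    have eA1 : (R * (1 - X))ᴴ * (R * U) = (1 - X) * (ρ * U) := by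
      simp only [Matrix.conjTranspose_mul, hRH, h1XH, Matrix.mul_assoc, hRRC]
    have eAA1 : (R * (1 - X))ᴴ * (R * (1 - X)) = G := by
      rw [hG]
      simp only [Matrix.conjTranspose_mul, hRH, h1XH, Matrix.mul_assoc, hRRC]
    have eBB1 : ((R * U)ᴴ * (R * U)).trace = 1 := by
      have e3 : (R * U)ᴴ * (R * U) = U * ρ * U := by
        simp only [Matrix.conjTranspose_mul, hRH, hUH, Matrix.mul_assoc, hRRC]
      rw [e3, Matrix.trace_mul_cycle, hUU, Matrix.one_mul, hρ1]
    rw [eA1, eAA1, eBB1] at cs1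
    rw [Complex.one_re, Real.sqrt_one, mul_one] at cs1
    -- Cauchy-Schwarz bound 2
    have cs2 := trace_cs (R * X) (R * ((1 - X) * U))
    have eA2 : (R * X)ᴴ * (R * ((1 - X) * U)) = X * (ρ * ((1 - X) * U)) := by
      simp only [Matrix.conjTranspose_mul, hRH, hXH, Matrix.mul_assoc, hRRC]
    have eAA2 : ((R * X)ᴴ * (R * X)).trace = p := by
      have e3 : (R * X)ᴴ * (R * X) = X * ρ * X := by
        simp only [Matrix.conjTranspose_mul, hRH, hXH, Matrix.mul_assoc, hRRC]
      rw [e3, hCtr]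
    have eBB2 : ((R * ((1 - X) * U))ᴴ * (R * ((1 - X) * U))).trace = G.trace := by
      have e3 : (R * ((1 - X) * U))ᴴ * (R * ((1 - X) * U)) = U * G * U := by
        rw [hG]
        simp only [Matrix.conjTranspose_mul, hRH, h1XH, hUH, Matrix.mul_assoc, hRRC]
      rw [e3, Matrix.trace_mul_cycle, hUU, Matrix.one_mul]
    rw [eA2, eAA2, eBB2] at cs2
    -- Cauchy-Schwarz bound 3
    have cs3 := trace_cs (R * X) (R * (X * U))
    have eA3 : (R * X)ᴴ * (R * (X * U)) = X * (ρ * (X * U)) := by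
      simp only [Matrix.conjTranspose_mul, hRH, hXH, Matrix.mul_assoc, hRRC]
    have eBB3 : ((R * (X * U))ᴴ * (R * (X * U))).trace = p := by
      have e3 : (R * (X * U))ᴴ * (R * (X * U)) = U * (X * ρ * X) * U := by
        simp only [Matrix.conjTranspose_mul, hRH, hXH, hUH, Matrix.mul_assoc, hRRC]
      rw [e3, Matrix.trace_mul_cycle, hUU, Matrix.one_mul, hCtr]
    rw [eA3, eAA2, eBB3] at cs3
    -- decomposition of (ρ - ρ') * U
    have hsplit : (ρ - ρ') * U = (1 - X) * (ρ * U) + X * (ρ * ((1 - X) * U))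
        + ((1 : ℂ) - p⁻¹) • (X * (ρ * (X * U))) := by
      rw [hρ']
      simp only [Matrix.sub_mul, Matrix.mul_sub, Matrix.smul_mul, Matrix.mul_smul,
        sub_smul, one_smul, Matrix.one_mul, Matrix.mul_one, Matrix.mul_assoc]
      abel
    have htrsplit : ((ρ - ρ') * U).trace = ((1 - X) * (ρ * U)).trace
        + (X * (ρ * ((1 - X) * U))).trace + ((1 : ℂ) - p⁻¹) * (X * (ρ * (X * U))).trace := by
      rw [hsplit, Matrix.trace_add, Matrix.trace_add, Matrix.trace_smul, smul_eq_mul]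
    -- numerical bounds
    have hsqG : Real.sqrt G.trace.re ≤ Real.sqrt εp := Real.sqrt_le_sqrt hGtr
    have hsqp : Real.sqrt p.re ≤ 1 := by
      rw [show (1 : ℝ) = Real.sqrt 1 by rw [Real.sqrt_one]]
      exact Real.sqrt_le_sqrt hple
    have hb1 : ‖((1 - X) * (ρ * U)).trace‖ ≤ Real.sqrt εp := le_trans cs1 hsqG
    have hb2 : ‖(X * (ρ * ((1 - X) * U))).trace‖ ≤ Real.sqrt εp := by
      calc ‖(X * (ρ * ((1 - X) * U))).trace‖
          ≤ Real.sqrt p.re * Real.sqrt G.trace.re := cs2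
        _ ≤ 1 * Real.sqrt εp := by
            apply mul_le_mul hsqp hsqG (Real.sqrt_nonneg _) (by norm_num)
        _ = Real.sqrt εp := by rw [one_mul]
    have hb3 : ‖(X * (ρ * (X * U))).trace‖ ≤ p.re := by
      calc ‖(X * (ρ * (X * U))).trace‖
          ≤ Real.sqrt p.re * Real.sqrt p.re := cs3
        _ = p.re := Real.mul_self_sqrt hpre.2
    have hinv1 : 1 ≤ p.re⁻¹ := by
      have hc : p.re * p.re⁻¹ = 1 := mul_inv_cancel₀ (ne_of_gt hppos)
      nlinarith [inv_pos.mpr hppos]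
    have hbinv : ‖((1 : ℂ) - p⁻¹)‖ = p.re⁻¹ - 1 := by
      rw [hpre.1, ← Complex.ofReal_inv, ← Complex.ofReal_one, ← Complex.ofReal_sub,
        Complex.norm_real, Real.norm_eq_abs]
      rw [abs_of_nonpos (by linarith)]
      simp
    have hb3' : ‖(((1 : ℂ) - p⁻¹) * (X * (ρ * (X * U))).trace)‖ ≤ εp := by
      rw [norm_mul, hbinv]
      calc (p.re⁻¹ - 1) * ‖(X * (ρ * (X * U))).trace‖
          ≤ (p.re⁻¹ - 1) * p.re := by
            apply mul_le_mul_of_nonneg_left hb3 (by linarith)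
        _ = 1 - p.re := by field_simp
        _ = εp := rfl
    -- put it together
    have htotal : ∑ i, |lam i| ≤ Real.sqrt εp + Real.sqrt εp + εp := by
      rw [hsum]
      calc ((ρ - ρ') * U).trace.re ≤ ‖((ρ - ρ') * U).trace‖ := Complex.re_le_norm _
        _ = ‖(((1 - X) * (ρ * U)).trace + (X * (ρ * ((1 - X) * U))).trace
            + ((1 : ℂ) - p⁻¹) * (X * (ρ * (X * U))).trace)‖ := by rw [htrsplit]
        _ ≤ ‖(((1 - X) * (ρ * U)).trace + (X * (ρ * ((1 - X) * U))).trace)‖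
            + ‖(((1 : ℂ) - p⁻¹) * (X * (ρ * (X * U))).trace)‖ := norm_add_le _ _
        _ ≤ (‖(((1 - X) * (ρ * U)).trace)‖
            + ‖((X * (ρ * ((1 - X) * U))).trace)‖)
            + ‖(((1 : ℂ) - p⁻¹) * (X * (ρ * (X * U))).trace)‖ :=
            add_le_add_left (norm_add_le _ _) _
        _ ≤ Real.sqrt εp + Real.sqrt εp + εp := add_le_add (add_le_add hb1 hb2) hb3'
    have hεpsq : εp ≤ Real.sqrt εp := by
      nlinarith [Real.sq_sqrt hεp0, Real.sqrt_nonneg εp]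
    have hsqle : Real.sqrt εp ≤ Real.sqrt ε := Real.sqrt_le_sqrt hεpε
    have hsqnn : 0 ≤ Real.sqrt ε := Real.sqrt_nonneg ε
    linarith
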